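/- In the convex setting (CP), let x ∈ 𝒳 with c_i(x) ≤ 0 for all i, and suppose z* ∈ 𝒳 together with μ ∈ ℝ^m_{≥0} and l ∈ ∂r(z*) satisfies the GHMA subproblem KKT conditions at x. Then F(x) − F(z*) ≥ (κ/(κ+1))·(L + Σ_{i=1}^m μ_i L_i)·‖x − z*‖^{κ+1}. -/

import Mathlib

open scoped RealInnerProductSpace
open Real Set

/-- The convex subdifferential of `r` at `u`. -/
def subgrad {n : ℕ} (r : EuclideanSpace ℝ (Fin n) → ℝ)
    (u : EuclideanSpace ℝ (Fin n)) : Set (EuclideanSpace ℝ (Fin n)) :=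
  {l | ∀ z, r u + ⟪l, z - u⟫ ≤ r z}


variable {n : ℕ}

lemma holder_cont (g' : EuclideanSpace ℝ (Fin n) → EuclideanSpace ℝ (Fin n))
    (κ L : ℝ) (hκ0 : 0 < κ)
    (hh : ∀ a b, ‖g' a - g' b‖ ≤ L * ‖a - b‖ ^ κ) : Continuous g' := by
  rw [continuous_iff_continuousAt]
  intro a
  rw [ContinuousAt, tendsto_iff_norm_sub_tendsto_zero]
  have h1 : Filter.Tendsto (fun b => L * ‖b - a‖ ^ κ) (nhds a) (nhds 0) := by
    have h2 : Filter.Tendsto (fun b : EuclideanSpace ℝ (Fin n) => ‖b - a‖) (nhds a) (nhds 0) :=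
      tendsto_norm_sub_self a
    have h3 : Filter.Tendsto (fun b : EuclideanSpace ℝ (Fin n) => ‖b - a‖ ^ κ) (nhds a) (nhds 0) := by
      have := (Real.continuousAt_rpow_const 0 κ (Or.inr hκ0.le)).tendsto.comp h2
      simpa [Function.comp_def, Real.zero_rpow hκ0.ne'] using this
    simpa using h3.const_mul L
  exact squeeze_zero (fun b => norm_nonneg _) (fun b => hh b a) h1

lemma descent_holder (g : EuclideanSpace ℝ (Fin n) → ℝ)
    (g' : EuclideanSpace ℝ (Fin n) → EuclideanSpace ℝ (Fin n))
    (hg : ∀ z, HasGradientAt g (g' z) z)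
    (κ L : ℝ) (hκ0 : 0 < κ) (hL : 0 ≤ L)
    (hh : ∀ a b, ‖g' a - g' b‖ ≤ L * ‖a - b‖ ^ κ)
    (x y : EuclideanSpace ℝ (Fin n)) :
    g y ≤ g x + ⟪g' x, y - x⟫ + L / (κ + 1) * ‖y - x‖ ^ (κ + 1) := by
  set d := y - x with hd
  have hκ1 : (0:ℝ) < κ + 1 := by linarith
  have hpath : ∀ t : ℝ, HasDerivAt (fun s => g (x + s • d)) (⟪g' (x + t • d), d⟫) t := by
    intro t
    have h1 : HasDerivAt (fun s : ℝ => x + s • d) d t := by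
      simpa using ((hasDerivAt_id t).smul_const d).const_add x
    have h2 := ((hg (x + t • d)).hasFDerivAt).comp_hasDerivAt t h1
    simpa [Function.comp_def] using h2
  have hcont : Continuous fun t : ℝ => ⟪g' (x + t • d), d⟫ := by
    exact Continuous.inner ((holder_cont g' κ L hκ0 hh).comp
      (continuous_const.add (continuous_id.smul continuous_const))) continuous_const
  have key : ∫ t in (0:ℝ)..1, ⟪g' (x + t • d), d⟫ = g y - g x := by
    have := intervalIntegral.integral_eq_sub_of_hasDerivAt
      (f := fun s => g (x + s • d)) (f' := fun t => ⟪g' (x + t • d), d⟫)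
      (a := (0:ℝ)) (b := 1) (fun t _ => hpath t) (hcont.intervalIntegrable 0 1)
    simpa [hd] using this
  have hbound : ∀ t ∈ Icc (0:ℝ) 1,
      ⟪g' (x + t • d), d⟫ ≤ ⟪g' x, d⟫ + L * t ^ κ * ‖d‖ ^ (κ + 1) := by
    intro t ht
    have h1 : ⟪g' (x + t • d) - g' x, d⟫ ≤ ‖g' (x + t • d) - g' x‖ * ‖d‖ :=
      real_inner_le_norm _ _
    have h2 : ‖g' (x + t • d) - g' x‖ ≤ L * ‖t • d‖ ^ κ := by
      simpa using hh (x + t • d) x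
    have h3 : ‖t • d‖ ^ κ = t ^ κ * ‖d‖ ^ κ := by
      rw [norm_smul, Real.norm_eq_abs, abs_of_nonneg ht.1, Real.mul_rpow ht.1 (norm_nonneg _)]
    have h4 : ‖d‖ ^ κ * ‖d‖ = ‖d‖ ^ (κ + 1) := by
      rcases eq_or_lt_of_le (norm_nonneg d) with h | h
      · rw [← h, Real.zero_rpow hκ0.ne', Real.zero_rpow hκ1.ne', zero_mul]
      · rw [Real.rpow_add h, Real.rpow_one]
    have h5 : ‖g' (x + t • d) - g' x‖ * ‖d‖ ≤ L * t ^ κ * ‖d‖ ^ (κ + 1) := by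
      calc ‖g' (x + t • d) - g' x‖ * ‖d‖ ≤ (L * ‖t • d‖ ^ κ) * ‖d‖ := by
            exact mul_le_mul_of_nonneg_right h2 (norm_nonneg _)
        _ = L * t ^ κ * ‖d‖ ^ (κ + 1) := by rw [h3, ← h4]; ring
    have := h1.trans h5
    rw [inner_sub_left] at this
    linarith
  have hrint : IntervalIntegrable (fun t : ℝ => ⟪g' x, d⟫ + L * t ^ κ * ‖d‖ ^ (κ + 1))
      MeasureTheory.volume 0 1 := by
    apply IntervalIntegrable.add (intervalIntegrable_const)
    have := (intervalIntegral.intervalIntegrable_rpow (μ := MeasureTheory.volume) (r := κ) (a := (0:ℝ)) (b := 1) (Or.inl hκ0.le))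
    simpa [mul_assoc, mul_comm, mul_left_comm] using (this.const_mul L).mul_const (‖d‖ ^ (κ + 1))
  have hmono : ∫ t in (0:ℝ)..1, ⟪g' (x + t • d), d⟫ ≤
      ∫ t in (0:ℝ)..1, (⟪g' x, d⟫ + L * t ^ κ * ‖d‖ ^ (κ + 1)) := by
    apply intervalIntegral.integral_mono_on (by norm_num) (hcont.intervalIntegrable 0 1) hrint
    exact hbound
  have hval : ∫ t in (0:ℝ)..1, (⟪g' x, d⟫ + L * t ^ κ * ‖d‖ ^ (κ + 1)) =
      ⟪g' x, d⟫ + L / (κ + 1) * ‖d‖ ^ (κ + 1) := by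
    rw [intervalIntegral.integral_add intervalIntegrable_const]
    · rw [intervalIntegral.integral_const]
      have : ∫ t in (0:ℝ)..1, L * t ^ κ * ‖d‖ ^ (κ + 1)
          = (L * ‖d‖ ^ (κ + 1)) * ∫ t in (0:ℝ)..1, t ^ κ := by
        rw [← intervalIntegral.integral_const_mul]
        congr 1; ext t; ring
      rw [this, integral_rpow (Or.inl (by linarith))]
      rw [Real.one_rpow, Real.zero_rpow (by positivity)]
      simp; ring
    · have := (intervalIntegral.intervalIntegrable_rpow (μ := MeasureTheory.volume) (r := κ) (a := (0:ℝ)) (b := 1) (Or.inl hκ0.le))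
      simpa [mul_assoc, mul_comm, mul_left_comm] using (this.const_mul L).mul_const (‖d‖ ^ (κ + 1))
  rw [key] at hmono
  rw [hval] at hmono
  linarith

/-- (Lemma 1 in the paper: sufficient descent for GHMA in the convex
setting (CP).)  If `z*` together with multipliers `μ ≥ 0` and `l ∈ ∂r(z*)` satisfies the
KKT conditions of the GHMA subproblem at a feasible `x`, then
`F(x) − F(z*) ≥ (κ/(κ+1))(L + Σᵢ μᵢLᵢ)‖x − z*‖^{κ+1}` where `F = f + r`. -/
theorem ghma_sufficient_descent {n m : ℕ}
    (X : Set (EuclideanSpace ℝ (Fin n))) (hXconv : Convex ℝ X) (hXclosed : IsClosed X)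
    (f r : EuclideanSpace ℝ (Fin n) → ℝ)
    (c : Fin m → EuclideanSpace ℝ (Fin n) → ℝ)
    (f' : EuclideanSpace ℝ (Fin n) → EuclideanSpace ℝ (Fin n))
    (c' : Fin m → EuclideanSpace ℝ (Fin n) → EuclideanSpace ℝ (Fin n))
    (hf : ∀ x, HasGradientAt f (f' x) x)
    (hc : ∀ i x, HasGradientAt (c i) (c' i x) x)
    (hfconv : ConvexOn ℝ univ f) (hcconv : ∀ i, ConvexOn ℝ univ (c i))
    (hrconv : ConvexOn ℝ univ r)
    (κ L : ℝ) (Li : Fin m → ℝ)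
    (hκ0 : 0 < κ) (hκ1 : κ ≤ 1) (hL : 0 < L) (hLi : ∀ i, 0 < Li i)
    (hfholder : ∀ x y, ‖f' x - f' y‖ ≤ L * ‖x - y‖ ^ κ)
    (hcholder : ∀ i x y, ‖c' i x - c' i y‖ ≤ Li i * ‖x - y‖ ^ κ)
    -- a feasible base point
    (x : EuclideanSpace ℝ (Fin n)) (hxX : x ∈ X) (hxfeas : ∀ i, c i x ≤ 0)
    -- KKT conditions of the GHMA subproblem (CP_x)
    (zstar : EuclideanSpace ℝ (Fin n)) (hzX : zstar ∈ X)
    (μ : Fin m → ℝ) (hμ : ∀ i, 0 ≤ μ i)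
    (l : EuclideanSpace ℝ (Fin n)) (hl : l ∈ subgrad r zstar)
    (hstat : ∀ z ∈ X, 0 ≤
      ⟪f' x + (L * ‖zstar - x‖ ^ (κ - 1)) • (zstar - x) +
        (∑ i, μ i • (c' i x + (Li i * ‖zstar - x‖ ^ (κ - 1)) • (zstar - x))) + l,
        z - zstar⟫)
    (hconstr : ∀ i, c i x + ⟪c' i x, zstar - x⟫ +
      (Li i / (κ + 1)) * ‖zstar - x‖ ^ (κ + 1) ≤ 0)
    (hcomp : ∀ i, μ i * (c i x + ⟪c' i x, zstar - x⟫ +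
      (Li i / (κ + 1)) * ‖zstar - x‖ ^ (κ + 1)) = 0) :
    (κ / (κ + 1)) * (L + ∑ i, μ i * Li i) * ‖x - zstar‖ ^ (κ + 1) ≤
      (f x + r x) - (f zstar + r zstar) := by
  have descent : f zstar ≤ f x + ⟪f' x, zstar - x⟫ + L / (κ + 1) * ‖zstar - x‖ ^ (κ + 1) :=
    descent_holder f f' hf κ L hκ0 hL.le hfholder x zstar
  have hl' : ∀ z, r zstar + ⟪l, z - zstar⟫ ≤ r z := hl
  have hκp : (0:ℝ) < κ + 1 := by linarith
  set d := zstar - x with hd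
  set N := ‖d‖ with hN
  set T := N ^ (κ + 1) with hT
  set S := ∑ i, μ i * Li i with hS
  have hnorm : ‖x - zstar‖ = N := by rw [hN, hd, norm_sub_rev]
  rw [hnorm]
  by_cases hz : d = 0
  · have hxz : zstar = x := by rwa [hd, sub_eq_zero] at hz
    have hN0 : N = 0 := by rw [hN, hz, norm_zero]
    rw [hN0, Real.zero_rpow hκp.ne']
    rw [hxz]
    simp
  · have hNpos : 0 < N := by rw [hN]; exact norm_pos_iff.mpr hz
    have hNT : N ^ (κ - 1) * N ^ 2 = T := by
      rw [hT, show (N:ℝ) ^ 2 = N ^ ((2:ℕ):ℝ) by rw [Real.rpow_natCast],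
        ← Real.rpow_add hNpos]
      congr 1
      push_cast; ring
    -- expand stationarity at z = x
    have hkey : ⟪f' x, d⟫ + (L + S) * T + (∑ i, μ i * ⟪c' i x, d⟫) + ⟪l, d⟫ ≤ 0 := by
      have h := hstat x hxX
      have hx : x - zstar = -d := by rw [hd]; abel
      rw [hx, inner_neg_right] at h
      have hsum2 : ∑ i, μ i * (⟪c' i x, d⟫ + Li i * N ^ (κ - 1) * N ^ 2)
          = (∑ i, μ i * ⟪c' i x, d⟫) + S * T := by
        simp_rw [mul_add, Finset.sum_add_distrib]
        congr 1
        rw [hS, Finset.sum_mul]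
        exact Finset.sum_congr rfl fun i _ => by rw [← hNT]; ring
      have hexp : ⟪f' x + (L * N ^ (κ - 1)) • d +
          (∑ i, μ i • (c' i x + (Li i * N ^ (κ - 1)) • d)) + l, d⟫
          = ⟪f' x, d⟫ + (L + S) * T + (∑ i, μ i * ⟪c' i x, d⟫) + ⟪l, d⟫ := by
        rw [inner_add_left, inner_add_left, inner_add_left, real_inner_smul_left,
          sum_inner]
        simp only [inner_add_left, real_inner_smul_left, real_inner_self_eq_norm_sq]
        rw [← hN, hsum2, ← hNT]
        ring
      rw [hexp] at h
      linarith
    -- bound the multiplier sum from below using complementarity and feasibility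
    have hsum : -(S * T) / (κ + 1) ≤ ∑ i, μ i * ⟪c' i x, d⟫ := by
      have hterm : ∀ i ∈ Finset.univ, -(μ i * Li i * T) / (κ + 1) ≤ μ i * ⟪c' i x, d⟫ := by
        intro i _
        have h2 : μ i * c i x ≤ 0 := mul_nonpos_of_nonneg_of_nonpos (hμ i) (hxfeas i)
        have h4 : μ i * ⟪c' i x, d⟫ = -(μ i * c i x) - μ i * (Li i / (κ + 1)) * T := by
          linear_combination hcomp i
        rw [h4, show μ i * (Li i / (κ + 1)) * T = (μ i * Li i * T) / (κ + 1) by ring]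
        rw [neg_div]
        have : 0 ≤ -(μ i * c i x) := by linarith
        linarith
      have e : ∑ i, -(μ i * Li i * T) / (κ + 1) = -(S * T) / (κ + 1) := by
        simp_rw [neg_div]
        rw [Finset.sum_neg_distrib, ← Finset.sum_div, hS, Finset.sum_mul]
      calc -(S * T) / (κ + 1) = ∑ i, -(μ i * Li i * T) / (κ + 1) := e.symm
        _ ≤ _ := Finset.sum_le_sum hterm
    have hr : -⟪l, d⟫ ≤ r x - r zstar := by
      have := hl' x
      have hx : x - zstar = -d := by rw [hd]; abel
      rw [hx, inner_neg_right] at this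
      linarith
    have hPR : ⟪f' x, d⟫ + ⟪l, d⟫ ≤ -((L + S) * T) + (S * T) / (κ + 1) := by
      have h5 : -(S * T) / (κ + 1) = -((S * T) / (κ + 1)) := by rw [neg_div]
      linarith [hkey, hsum]
    have hfield : κ / (κ + 1) * (L + S) * T
        = (L + S) * T - (S * T) / (κ + 1) - L / (κ + 1) * T := by
      field_simp
      ring
    linarith [descent, hr, hPR]
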